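/- arXiv:math/9804137 — 2 statements merged into one kernel-verified Lean document; each statement's English description precedes it below -/
import Mathlib

section
/- Let S be a closed subset of the n-dimensional torus T^n = ℝ^n/ℤ^n such that for every x ∈ S and every positive integer m, m•x ∈ S. Then S is a finite union of closed subgroups of T^n. -/
open Metric Filter Set


open Metric Filter Set

variable {E : Type*} [NormedAddCommGroup E] [NormedSpace ℝ E] [FiniteDimensional ℝ E]

lemma discrete_of_no_line (D : AddSubgroup E) (hD : IsClosed (D : Set E))
    (hno : ∀ u : E, u ≠ 0 → ¬ (∀ t : ℝ, t • u ∈ D)) :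
    ∃ r > 0, ∀ d ∈ D, ‖d‖ < r → d = 0 := by
  by_contra h
  push_neg at h
  have hseq : ∀ j : ℕ, ∃ y : E, y ∈ D ∧ ‖y‖ < 1/(j+1) ∧ y ≠ 0 := by
    intro j
    obtain ⟨d, hd, hdn, hd0⟩ := h (1/(j+1)) (by positivity)
    exact ⟨d, hd, hdn, hd0⟩
  choose y hyD hyn hy0 using hseq
  set u : ℕ → E := fun j => ‖y j‖⁻¹ • y j with hu
  have hnorm : ∀ j, ‖y j‖ ≠ 0 := fun j => norm_ne_zero_iff.2 (hy0 j)
  have husphere : ∀ j, u j ∈ sphere (0:E) 1 := by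
    intro j
    simp [hu, norm_smul, abs_of_nonneg (inv_nonneg.2 (norm_nonneg _)),
      inv_mul_cancel₀ (hnorm j)]
  obtain ⟨u₀, hu₀, φ, hφ, hconv⟩ := (isCompact_sphere (0:E) 1).tendsto_subseq husphere
  have hu₀ne : u₀ ≠ 0 := by
    intro h0
    rw [h0] at hu₀
    simp at hu₀
  refine hno u₀ hu₀ne (fun t => ?_)
  have hyφn : Tendsto (fun j => ‖y (φ j)‖) atTop (nhds 0) := by
    refine squeeze_zero (fun j => norm_nonneg _) (fun j => ?_)
      tendsto_one_div_add_atTop_nhds_zero_nat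
    refine le_trans (hyn (φ j)).le ?_
    apply one_div_le_one_div_of_le (by positivity)
    have : j ≤ φ j := hφ.le_apply
    push_cast
    linarith [(Nat.cast_le (α := ℝ)).2 this]
  set m : ℕ → ℤ := fun j => ⌊t / ‖y (φ j)‖⌋ with hm
  have key : ∀ j, |(m j : ℝ) * ‖y (φ j)‖ - t| ≤ ‖y (φ j)‖ := by
    intro j
    have hpos : (0:ℝ) < ‖y (φ j)‖ := lt_of_le_of_ne (norm_nonneg _) (Ne.symm (hnorm (φ j)))
    have h1 : (m j : ℝ) * ‖y (φ j)‖ ≤ t := (le_div_iff₀ hpos).1 (Int.floor_le _)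
    have h2 : t < ((m j : ℝ) + 1) * ‖y (φ j)‖ := (div_lt_iff₀ hpos).1 (Int.lt_floor_add_one _)
    rw [abs_le]
    constructor <;> nlinarith
  have hscal : Tendsto (fun j => (m j : ℝ) * ‖y (φ j)‖) atTop (nhds t) := by
    rw [← tendsto_sub_nhds_zero_iff, tendsto_zero_iff_abs_tendsto_zero]
    exact squeeze_zero (fun j => abs_nonneg _) key hyφn
  have hlim : Tendsto (fun j => (m j : ℝ) • y (φ j)) atTop (nhds (t • u₀)) := by
    have heq : ∀ j, (m j : ℝ) • y (φ j) = ((m j : ℝ) * ‖y (φ j)‖) • u (φ j) := by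
      intro j
      rw [hu, smul_smul, mul_assoc, mul_inv_cancel₀ (hnorm (φ j)), mul_one]
    simp_rw [heq]
    exact hscal.smul hconv
  have hmem : ∀ j, (m j : ℝ) • y (φ j) ∈ D := by
    intro j
    have h1 := zsmul_mem (hyD (φ j)) (m j)
    rwa [← Int.cast_smul_eq_zsmul ℝ] at h1
  exact hD.mem_of_tendsto hlim (Eventually.of_forall hmem)

/-- The subspace of directions whose whole line lies in `G`. -/
def lineSubmodule (G : AddSubgroup E) : Submodule ℝ E where
  carrier := {v | ∀ t : ℝ, t • v ∈ G}
  add_mem' := by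
    intro a b ha hb t
    rw [smul_add]
    exact add_mem (ha t) (hb t)
  zero_mem' := by intro t; simpa using zero_mem G
  smul_mem' := by
    intro c v hv t
    rw [smul_smul]
    exact hv (t * c)

lemma lineSubmodule_le (G : AddSubgroup E) : (lineSubmodule G : Set E) ⊆ (G : Set E) := by
  intro v hv
  simpa using hv 1

lemma exists_radius (G : AddSubgroup E) (hG : IsClosed (G : Set E)) :
    ∃ r > 0, ∀ g ∈ G, ‖g‖ < r → g ∈ lineSubmodule G := by
  classical
  set V := lineSubmodule (E := E) G with hV
  obtain ⟨W, hW⟩ := Submodule.exists_isCompl V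
  set q : E →ₗ[ℝ] V := V.projectionOnto W hW with hq
  set f : E →ₗ[ℝ] E := (LinearMap.id : E →ₗ[ℝ] E) - V.subtype.comp q with hf
  have hfW : ∀ x : E, f x ∈ W := by
    intro x
    have h0 : q (f x) = 0 := by
      have := Submodule.projectionOnto_apply_left hW (q x)
      simp only [hf, LinearMap.sub_apply, LinearMap.id_apply, LinearMap.comp_apply,
        map_sub, Submodule.subtype_apply, this]
      exact (congrArg (q x - ·) this).trans (sub_self _)
    have := Submodule.ker_projectionOnto hW
    rw [← this]
    exact LinearMap.mem_ker.2 h0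
  have hfcont : Continuous f := f.continuous_of_finiteDimensional
  obtain ⟨C, hC0, hC⟩ : ∃ C > 0, ∀ x : E, ‖f x‖ ≤ C * ‖x‖ := by
    set g := LinearMap.toContinuousLinearMap f with hg
    refine ⟨‖g‖ + 1, by positivity, fun x => ?_⟩
    have h1 : ‖g x‖ ≤ ‖g‖ * ‖x‖ := g.le_opNorm x
    have h2 : ‖g x‖ = ‖f x‖ := rfl
    rw [h2] at h1
    nlinarith [norm_nonneg x]
  -- D = G ∩ W is discrete
  set D : AddSubgroup E := G ⊓ W.toAddSubgroup with hD
  have hDclosed : IsClosed (D : Set E) := by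
    have : (D : Set E) = (G : Set E) ∩ (W : Set E) := rfl
    rw [this]
    exact hG.inter (Submodule.closed_of_finiteDimensional W)
  have hDnoline : ∀ u : E, u ≠ 0 → ¬ (∀ t : ℝ, t • u ∈ D) := by
    intro u hu hline
    have huV : u ∈ V := fun t => (hline t).1
    have huW : u ∈ W := by simpa using (hline 1).2
    have h1 : u ∈ V ⊓ W := Submodule.mem_inf.2 ⟨huV, huW⟩
    rw [hW.inf_eq_bot, Submodule.mem_bot] at h1
    exact hu h1
  obtain ⟨r₁, hr₁, hr₁'⟩ := discrete_of_no_line D hDclosed hDnoline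
  refine ⟨r₁ / C, by positivity, ?_⟩
  intro g hg hgn
  have hvV : (q g : E) ∈ V := (q g).2
  have hw : f g ∈ D := by
    constructor
    · have : (q g : E) ∈ G := lineSubmodule_le G hvV
      simpa [hf] using sub_mem hg this
    · exact hfW g
  have hfg0 : f g = 0 := by
    apply hr₁' _ hw
    calc ‖f g‖ ≤ C * ‖g‖ := hC g
    _ < C * (r₁ / C) := by gcongr
    _ = r₁ := by field_simp
  have : g = (q g : E) := by
    have := sub_eq_zero.1 (by simpa [hf] using hfg0)
    simpa using this
  rw [this]; exact hvV
open Metric Filter Set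

section Torus
variable {n : ℕ}

abbrev E' (n : ℕ) := Fin n → ℝ
abbrev T' (n : ℕ) := Fin n → AddCircle (1:ℝ)

/-- The projection `ℝ^n → T^n` as an additive group hom. -/
noncomputable def torusProj (n : ℕ) : E' n →+ T' n where
  toFun z := fun i => (z i : AddCircle (1:ℝ))
  map_zero' := by ext i; simp
  map_add' a b := by ext i; simp

lemma torusProj_continuous : Continuous (torusProj n) := by
  apply continuous_pi
  intro i
  exact (AddCircle.continuous_mk' 1).comp (continuous_apply i)

lemma norm_torusProj_le (z : E' n) : ‖torusProj n z‖ ≤ ‖z‖ := by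
  apply pi_norm_le_iff_of_nonneg (norm_nonneg z) |>.2
  intro i
  calc ‖(z i : AddCircle (1:ℝ))‖ ≤ ‖z i‖ := QuotientAddGroup.norm_mk_le_norm
  _ ≤ ‖z‖ := norm_le_pi_norm z i

lemma exists_lift_norm_eq (x : T' n) : ∃ z : E' n, torusProj n z = x ∧ ‖z‖ = ‖x‖ := by
  have hcoord : ∀ c : AddCircle (1:ℝ), ∃ r : ℝ, (r : AddCircle (1:ℝ)) = c ∧ |r| = ‖c‖ := by
    intro c
    obtain ⟨a, rfl⟩ := QuotientAddGroup.mk_surjective c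
    refine ⟨a - round a, ?_, ?_⟩
    · rw [QuotientAddGroup.eq_iff_sub_mem]
      simp only [sub_sub_cancel_left]
      refine AddSubgroup.neg_mem _ (AddSubgroup.mem_zmultiples_iff.2 ⟨round a, by simp⟩)
    · rw [AddCircle.norm_eq]
      simp
  choose r hr hrn using hcoord
  refine ⟨fun i => r (x i), by ext i; simp [torusProj, hr], ?_⟩
  apply le_antisymm
  · apply pi_norm_le_iff_of_nonneg (norm_nonneg x) |>.2
    intro i
    rw [Real.norm_eq_abs, hrn]
    exact norm_le_pi_norm x i
  · apply pi_norm_le_iff_of_nonneg (norm_nonneg _) |>.2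
    intro i
    rw [← hrn (x i), ← Real.norm_eq_abs]
    exact norm_le_pi_norm (fun i => r (x i)) i
end Torus
open Metric Filter Set

variable {α : Type*} [SeminormedAddCommGroup α]

lemma infDist_add_right_le {K : AddSubgroup α} (hKc : IsCompact (K : Set α))
    {k : α} (hk : k ∈ K) (y : α) :
    infDist (y + k) (K : Set α) ≤ infDist y (K : Set α) := by
  obtain ⟨k', hk', hdk'⟩ := hKc.exists_infDist_eq_dist ⟨0, K.zero_mem⟩ y
  rw [hdk']
  calc infDist (y + k) (K : Set α) ≤ dist (y + k) (k' + k) := infDist_le_dist_of_mem (K.add_mem hk' hk)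
  _ = dist y k' := by rw [dist_add_right]

lemma infDist_add_right_eq {K : AddSubgroup α} (hKc : IsCompact (K : Set α))
    {k : α} (hk : k ∈ K) (y : α) :
    infDist (y + k) (K : Set α) = infDist y (K : Set α) := by
  refine le_antisymm (infDist_add_right_le hKc hk y) ?_
  have := infDist_add_right_le hKc (K.neg_mem hk) (y + k)
  simpa using this
open Metric Filter Set

variable {E : Type*} [NormedAddCommGroup E] [NormedSpace ℝ E] [FiniteDimensional ℝ E]

lemma infDist_two_smul (V : Submodule ℝ E) (z : E) :
    infDist ((2:ℝ) • z) (V : Set E) = 2 * infDist z (V : Set E) := by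
  have hVc : IsClosed (V : Set E) := Submodule.closed_of_finiteDimensional V
  have hVne : (V : Set E).Nonempty := ⟨0, V.zero_mem⟩
  apply le_antisymm
  · obtain ⟨v, hv, hdv⟩ := hVc.exists_infDist_eq_dist hVne z
    calc infDist ((2:ℝ) • z) (V : Set E) ≤ dist ((2:ℝ) • z) ((2:ℝ) • v) :=
          infDist_le_dist_of_mem (V.smul_mem _ hv)
    _ = 2 * dist z v := by
          rw [dist_eq_norm, dist_eq_norm, ← smul_sub, norm_smul]
          norm_num
    _ = 2 * infDist z (V : Set E) := by rw [hdv]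
  · obtain ⟨v, hv, hdv⟩ := hVc.exists_infDist_eq_dist hVne ((2:ℝ) • z)
    rw [hdv]
    have h2 : dist ((2:ℝ) • z) v = 2 * dist z ((2:ℝ)⁻¹ • v) := by
      rw [dist_eq_norm, dist_eq_norm]
      rw [show (2:ℝ) • z - v = (2:ℝ) • (z - (2:ℝ)⁻¹ • v) by
        rw [smul_sub, smul_inv_smul₀ (by norm_num)]]
      rw [norm_smul]; norm_num
    rw [h2]
    have : infDist z (V : Set E) ≤ dist z ((2:ℝ)⁻¹ • v) :=
      infDist_le_dist_of_mem (V.smul_mem _ hv)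
    linarith

section Eps
variable {n : ℕ} (K : AddSubgroup (T' n)) (hK : IsClosed (K : Set (T' n)))

lemma torus_local_eq (hK : IsClosed (K : Set (T' n))) :
    ∃ r > 0, ∀ z : E' n, 2 * ‖z‖ < r →
      infDist (torusProj n z) (K : Set (T' n))
        = infDist z ((lineSubmodule (K.comap (torusProj n)) : Submodule ℝ (E' n)) : Set (E' n)) := by
  set G : AddSubgroup (E' n) := K.comap (torusProj n) with hG
  have hGclosed : IsClosed (G : Set (E' n)) := by
    have : (G : Set (E' n)) = (torusProj n) ⁻¹' (K : Set (T' n)) := rfl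
    rw [this]
    exact hK.preimage torusProj_continuous
  obtain ⟨r, hr, hrV⟩ := exists_radius G hGclosed
  set V := lineSubmodule (E := E' n) G
  refine ⟨r, hr, fun z hz => ?_⟩
  have hKcomp : IsCompact (K : Set (T' n)) := hK.isCompact
  have hKne : (K : Set (T' n)).Nonempty := ⟨0, K.zero_mem⟩
  apply le_antisymm
  · have hVc : IsClosed (V : Set (E' n)) := Submodule.closed_of_finiteDimensional V
    obtain ⟨v, hv, hdv⟩ := hVc.exists_infDist_eq_dist ⟨0, V.zero_mem⟩ z
    have hπv : torusProj n v ∈ K := lineSubmodule_le G hv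
    calc infDist (torusProj n z) (K : Set (T' n)) ≤ dist (torusProj n z) (torusProj n v) :=
          infDist_le_dist_of_mem hπv
    _ ≤ dist z v := by
          rw [dist_eq_norm, dist_eq_norm, ← map_sub]
          exact norm_torusProj_le _
    _ = infDist z (V : Set (E' n)) := hdv.symm
  · obtain ⟨k, hk, hdk⟩ := hKcomp.exists_infDist_eq_dist hKne (torusProj n z)
    obtain ⟨w, hw, hwn⟩ := exists_lift_norm_eq (torusProj n z - k)
    have hzw : z - w ∈ G := by
      have : torusProj n (z - w) = k := by
        rw [map_sub, hw]; abel
      show torusProj n (z - w) ∈ K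
      rw [this]; exact hk
    have hnormk : ‖torusProj n z - k‖ ≤ ‖z‖ := by
      rw [← dist_eq_norm, ← hdk]
      calc infDist (torusProj n z) (K : Set (T' n)) ≤ dist (torusProj n z) 0 :=
            infDist_le_dist_of_mem K.zero_mem
      _ = ‖torusProj n z‖ := by rw [dist_zero_right]
      _ ≤ ‖z‖ := norm_torusProj_le z
    have hzwV : z - w ∈ V := by
      apply hrV _ hzw
      calc ‖z - w‖ ≤ ‖z‖ + ‖w‖ := norm_sub_le z w
      _ = ‖z‖ + ‖torusProj n z - k‖ := by rw [hwn]
      _ ≤ 2 * ‖z‖ := by linarith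
      _ < r := hz
    calc infDist z (V : Set (E' n)) ≤ dist z (z - w) := infDist_le_dist_of_mem hzwV
    _ = ‖w‖ := by rw [dist_eq_norm]; congr 1; abel
    _ = infDist (torusProj n z) (K : Set (T' n)) := by rw [hwn, hdk, dist_eq_norm]
end Eps

section Eps2
variable {n : ℕ}

lemma exists_eps (K : AddSubgroup (T' n)) (hK : IsClosed (K : Set (T' n))) :
    ∃ ε > 0, ∀ x : T' n, (∀ m : ℕ, 0 < m → infDist (m • x) (K : Set (T' n)) < ε) → x ∈ K := by
  obtain ⟨r, hr, hloc⟩ := torus_local_eq K hK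
  have hKcomp : IsCompact (K : Set (T' n)) := hK.isCompact
  have hKne : (K : Set (T' n)).Nonempty := ⟨0, K.zero_mem⟩
  set V := lineSubmodule (K.comap (torusProj n)) with hV
  -- doubling
  have hdouble : ∀ y : T' n, infDist y (K : Set (T' n)) < r/4 →
      infDist (2 • y) (K : Set (T' n)) = 2 * infDist y (K : Set (T' n)) := by
    intro y hy
    obtain ⟨k, hk, hdk⟩ := hKcomp.exists_infDist_eq_dist hKne y
    set δ := y - k with hδ
    obtain ⟨z, hz, hzn⟩ := exists_lift_norm_eq δ
    have hznorm : ‖z‖ < r/4 := by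
      rw [hzn, hδ, ← dist_eq_norm, ← hdk]; exact hy
    have hyδ : infDist δ (K : Set (T' n)) = infDist y (K : Set (T' n)) := by
      conv_rhs => rw [show y = δ + k by rw [hδ]; abel]
      rw [infDist_add_right_eq hKcomp hk]
    have h2yδ : infDist (2 • y) (K : Set (T' n)) = infDist (2 • δ) (K : Set (T' n)) := by
      conv_lhs => rw [show (2:ℕ) • y = 2 • δ + 2 • k by rw [hδ, smul_sub]; abel]
      rw [infDist_add_right_eq hKcomp (K.nsmul_mem hk 2)]
    have h2δ : (2:ℕ) • δ = torusProj n ((2:ℝ) • z) := by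
      rw [← hz, ← map_nsmul]
      congr 1
      rw [← Nat.cast_smul_eq_nsmul ℝ 2 z]
      norm_num
    rw [h2yδ, h2δ, hloc _ (by rw [norm_smul]; simp [abs_of_nonneg]; linarith),
      infDist_two_smul, ← hloc z (by linarith), hz, hyδ]
  -- no small subgroups
  refine ⟨r/8, by positivity, fun x hx => ?_⟩
  by_contra hxK
  have hρpos : 0 < infDist x (K : Set (T' n)) := (hK.notMem_iff_infDist_pos hKne).1 hxK
  have hclaim : ∀ i : ℕ, infDist ((2^i : ℕ) • x) (K : Set (T' n))
      = 2^i * infDist x (K : Set (T' n)) := by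
    intro i
    induction i with
    | zero => simp
    | succ i ih =>
      rw [pow_succ', mul_smul, hdouble _ (by
        rw [ih]
        calc (2:ℝ)^i * infDist x (K : Set (T' n)) = infDist ((2^i : ℕ) • x) (K : Set (T' n)) := by
              rw [ih]
        _ < r/8 := hx _ (pow_pos two_pos i)
        _ < r/4 := by linarith), ih]
      push_cast
      ring
  obtain ⟨i, hi⟩ := pow_unbounded_of_one_lt ((r/8) / infDist x (K : Set (T' n))) one_lt_two
  have h1 : r/8 < 2^i * infDist x (K : Set (T' n)) := by
    rw [div_lt_iff₀ hρpos] at hi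
    linarith
  have h2 := hx (2^i) (pow_pos two_pos i)
  rw [hclaim i] at h2
  linarith
end Eps2

section Orbit
variable {n : ℕ}

lemma orbit_closure_subset {S : Set (T' n)} (hS : IsClosed S)
    (hfull : ∀ x ∈ S, ∀ m : ℕ, 0 < m → (m • x) ∈ S) {x : T' n} (hx : x ∈ S) :
    ((AddSubgroup.closure {x}).topologicalClosure : Set (T' n)) ⊆ S := by
  set A : Set (T' n) := (fun m : ℕ => m • x) '' {m | 0 < m} with hA
  have hAS : A ⊆ S := by
    rintro _ ⟨m, hm, rfl⟩
    exact hfull x hx m hm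
  have hsub : (AddSubgroup.closure {x} : Set (T' n)) ⊆ closure A := by
    intro y hy
    obtain ⟨k, rfl⟩ := AddSubgroup.mem_closure_singleton.1 hy
    have hcl : MapClusterPt (k • x) atTop (fun m : ℕ => m • x) :=
      mapClusterPt_self_zsmul_atTop_nsmul x k
    rw [mem_closure_iff_clusterPt]
    refine hcl.clusterPt.mono ?_
    rw [Filter.le_principal_iff, Filter.mem_map]
    exact Filter.mem_of_superset (Filter.Ioi_mem_atTop 0) (fun m hm => ⟨m, hm, rfl⟩)
  calc ((AddSubgroup.closure {x}).topologicalClosure : Set (T' n))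
      = closure (AddSubgroup.closure {x} : Set (T' n)) := by
        rw [AddSubgroup.topologicalClosure_coe]
  _ ⊆ closure (closure A) := closure_mono hsub
  _ = closure A := closure_closure
  _ ⊆ S := closure_minimal hAS hS
end Orbit

section Closeds
open TopologicalSpace EMetric ENNReal
variable {n : ℕ}

lemma isClosed_subgroupLike' (S : Set (T' n)) (hS : IsClosed S) :
    IsClosed {C : NonemptyCompacts (T' n) | (0:T' n) ∈ (C : Set (T' n)) ∧
      (∀ a ∈ (C : Set (T' n)), ∀ b ∈ (C : Set (T' n)), a - b ∈ (C : Set (T' n))) ∧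
      (C : Set (T' n)) ⊆ S} := by
  rw [← closure_subset_iff_isClosed]
  intro C hC
  have hC' : ∀ ε : ℝ, 0 < ε → ∃ D : NonemptyCompacts (T' n), ((0:T' n) ∈ (D : Set (T' n)) ∧
      (∀ a ∈ (D : Set (T' n)), ∀ b ∈ (D : Set (T' n)), a - b ∈ (D : Set (T' n))) ∧
      (D : Set (T' n)) ⊆ S) ∧ hausdorffEdist (C : Set (T' n)) (D : Set (T' n)) < ENNReal.ofReal ε := by
    intro ε hε
    rw [EMetric.mem_closure_iff] at hC
    obtain ⟨D, hD, hCD⟩ := hC (ENNReal.ofReal ε) (by simp [hε])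
    exact ⟨D, hD, hCD⟩
  have memC : ∀ y : T' n, (∀ ε : ℝ, 0 < ε → ∃ c ∈ (C : Set (T' n)), dist y c < ε) →
      y ∈ (C : Set (T' n)) := by
    intro y hy
    rw [← C.isCompact.isClosed.closure_eq, Metric.mem_closure_iff]
    exact hy
  refine ⟨?_, ?_, ?_⟩
  · apply memC
    intro ε hε
    obtain ⟨D, ⟨h0, _, _⟩, hCD⟩ := hC' ε hε
    rw [hausdorffEdist, hausdorffEdist_comm] at hCD
    obtain ⟨c, hc, hdc⟩ := exists_edist_lt_of_hausdorffEdist_lt h0 hCD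
    exact ⟨c, hc, by rwa [edist_lt_ofReal] at hdc⟩
  · intro a ha b hb
    apply memC
    intro ε hε
    obtain ⟨D, ⟨h0, hsub, _⟩, hCD⟩ := hC' (ε/3) (by linarith)
    obtain ⟨a', ha', hda⟩ := exists_edist_lt_of_hausdorffEdist_lt ha hCD
    obtain ⟨b', hb', hdb⟩ := exists_edist_lt_of_hausdorffEdist_lt hb hCD
    rw [edist_lt_ofReal] at hda hdb
    have hab' : a' - b' ∈ (D : Set (T' n)) := hsub a' ha' b' hb'
    rw [hausdorffEdist, hausdorffEdist_comm] at hCD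
    obtain ⟨c, hc, hdc⟩ := exists_edist_lt_of_hausdorffEdist_lt hab' hCD
    rw [edist_lt_ofReal] at hdc
    refine ⟨c, hc, ?_⟩
    calc dist (a - b) c ≤ dist (a - b) (a' - b') + dist (a' - b') c := dist_triangle _ _ _
    _ ≤ (dist a a' + dist b b') + dist (a' - b') c := by
          gcongr
          exact dist_sub_sub_le _ _ _ _
    _ < ε := by linarith
  · intro c hc
    rw [← hS.closure_eq, Metric.mem_closure_iff]
    intro ε hε
    obtain ⟨D, ⟨_, _, hDS⟩, hCD⟩ := hC' ε hε
    obtain ⟨d, hd, hdd⟩ := exists_edist_lt_of_hausdorffEdist_lt hc hCD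
    exact ⟨d, hDS hd, by rwa [edist_lt_ofReal] at hdd⟩

/-- Build an `AddSubgroup` from a subgroup-like closed set. -/
noncomputable def closedsToSubgroup (C : NonemptyCompacts (T' n)) (h0 : (0:T' n) ∈ (C : Set (T' n)))
    (hsub : ∀ a ∈ (C : Set (T' n)), ∀ b ∈ (C : Set (T' n)), a - b ∈ (C : Set (T' n))) :
    AddSubgroup (T' n) where
  carrier := (C : Set (T' n))
  zero_mem' := h0
  neg_mem' := by
    intro a ha
    have := hsub 0 h0 a ha
    simpa using this
  add_mem' := by
    intro a b ha hb
    have hnb : -b ∈ (C : Set (T' n)) := by simpa using hsub 0 h0 b hb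
    have := hsub a ha (-b) hnb
    simpa using this
end Closeds

open TopologicalSpace in
/-- Lawrence's theorem (Corollary 1.B): a closed subset of the torus `T^n` stable under
positive integer multiples is a finite union of closed subgroups. -/
theorem lawrence_closed_full_is_finite_union_of_closed_subgroups
    (n : ℕ) (S : Set (Fin n → AddCircle (1:ℝ))) (hS : IsClosed S)
    (hfull : ∀ x ∈ S, ∀ m : ℕ, 0 < m → (m • x) ∈ S) :
    ∃ 𝒢 : Finset (AddSubgroup (Fin n → AddCircle (1:ℝ))),
      (∀ G ∈ 𝒢, IsClosed (G : Set (Fin n → AddCircle (1:ℝ)))) ∧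
      S = ⋃ G ∈ 𝒢, (G : Set (Fin n → AddCircle (1:ℝ))) := by
  classical
  set 𝒳 : Set (NonemptyCompacts (T' n)) := {C | (0:T' n) ∈ (C : Set (T' n)) ∧
      (∀ a ∈ (C : Set (T' n)), ∀ b ∈ (C : Set (T' n)), a - b ∈ (C : Set (T' n))) ∧
      (C : Set (T' n)) ⊆ S} with h𝒳
  have h𝒳closed : IsClosed 𝒳 := isClosed_subgroupLike' S hS
  have h𝒳cpt : IsCompact 𝒳 := h𝒳closed.isCompact
  -- for each C in 𝒳 choose the subgroup and an epsilon
  have key : ∀ C ∈ 𝒳, ∃ (K : AddSubgroup (T' n)), (K : Set (T' n)) = (C : Set (T' n)) ∧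
      ∃ ε > 0, ∀ x : T' n,
        (∀ m : ℕ, 0 < m → Metric.infDist (m • x) (K : Set (T' n)) < ε) → x ∈ K := by
    intro C hC
    obtain ⟨h0, hsub, hCS⟩ := hC
    refine ⟨closedsToSubgroup C h0 hsub, rfl, ?_⟩
    exact exists_eps _ C.isCompact.isClosed
  choose! K hKC ε hε hεprop using key
  -- cover 𝒳 by balls
  have hcover : 𝒳 ⊆ ⋃ C ∈ 𝒳, EMetric.ball C (ENNReal.ofReal (ε C)) := by
    intro C hC
    exact Set.mem_biUnion hC (EMetric.mem_ball_self (by simp [hε C hC]))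
  obtain ⟨t, ht𝒳, htfin, htcover⟩ :=
    h𝒳cpt.elim_finite_subcover_image (fun C _ => EMetric.isOpen_ball) hcover
  refine ⟨htfin.toFinset.image K, ?_, ?_⟩
  · intro G hG
    simp only [Finset.mem_image, Set.Finite.mem_toFinset] at hG
    obtain ⟨C, hCt, rfl⟩ := hG
    rw [hKC C (ht𝒳 hCt)]
    exact C.isCompact.isClosed
  · apply le_antisymm
    · intro x hx
      -- the closed subgroup generated by x
      set Gx : AddSubgroup (T' n) := (AddSubgroup.closure {x}).topologicalClosure with hGx
      have hGxS : (Gx : Set (T' n)) ⊆ S := orbit_closure_subset hS hfull hx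
      have hxGx : x ∈ Gx :=
        (AddSubgroup.le_topologicalClosure _) (AddSubgroup.subset_closure rfl)
      set Cx : NonemptyCompacts (T' n) :=
        ⟨⟨(Gx : Set (T' n)), (AddSubgroup.isClosed_topologicalClosure _).isCompact⟩,
          ⟨0, Gx.zero_mem⟩⟩ with hCx
      have hCx𝒳 : Cx ∈ 𝒳 := by
        refine ⟨Gx.zero_mem, fun a ha b hb => ?_, hGxS⟩
        exact Gx.sub_mem ha hb
      obtain ⟨C, hCt, hCball⟩ := Set.mem_iUnion₂.1 (htcover hCx𝒳)
      have hC𝒳 : C ∈ 𝒳 := ht𝒳 hCt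
      have hd : EMetric.hausdorffEdist (Gx : Set (T' n)) (C : Set (T' n))
          < ENNReal.ofReal (ε C) := by
        rw [EMetric.mem_ball] at hCball
        exact hCball
      have hxK : x ∈ K C := by
        apply hεprop C hC𝒳
        intro m hm
        have hmx : (m • x) ∈ (Gx : Set (T' n)) := Gx.nsmul_mem hxGx m
        obtain ⟨c, hc, hdc⟩ := EMetric.exists_edist_lt_of_hausdorffEdist_lt hmx hd
        rw [edist_lt_ofReal] at hdc
        rw [hKC C hC𝒳]
        exact (Metric.infDist_lt_iff C.nonempty).2 ⟨c, hc, hdc⟩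
      apply Set.mem_biUnion (Finset.mem_image_of_mem K (htfin.mem_toFinset.2 hCt)) hxK
    · intro x hx
      obtain ⟨_, ⟨G, rfl⟩, _, ⟨hG, rfl⟩, hxG⟩ := hx
      simp only [Finset.mem_image, Set.Finite.mem_toFinset] at hG
      obtain ⟨C, hCt, rfl⟩ := hG
      have hC𝒳 : C ∈ 𝒳 := ht𝒳 hCt
      have := hC𝒳.2.2
      rw [hKC C hC𝒳] at hxG
      exact this hxG
end

section
/- For n ≥ 3, the set S of elements A in SO(n) satisfying A² = Id is a closed subset of SO(n) that is stable under taking positive integer powers (A ∈ S implies A^m ∈ S for all m ≥ 1), but S is not a finite union of closed subgroups of SO(n). -/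
open Matrix

noncomputable def B3 (θ : ℝ) : Matrix (Fin 3) (Fin 3) ℝ :=
  !![Real.cos θ, Real.sin θ, 0; Real.sin θ, -Real.cos θ, 0; 0, 0, -1]

theorem B3_mul (θ φ : ℝ) : B3 θ * B3 φ =
    !![Real.cos θ * Real.cos φ + Real.sin θ * Real.sin φ,
       Real.cos θ * Real.sin φ - Real.sin θ * Real.cos φ, 0;
       Real.sin θ * Real.cos φ - Real.cos θ * Real.sin φ,
       Real.sin θ * Real.sin φ + Real.cos θ * Real.cos φ, 0;
       0, 0, 1] := by
  simp [B3, Matrix.mul_fin_three, sub_eq_add_neg]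

theorem B3_sq (θ : ℝ) : B3 θ * B3 θ = 1 := by
  rw [B3_mul]
  ext i j
  fin_cases i <;> fin_cases j <;>
    simp [Real.sin_sq_add_cos_sq, Real.cos_sq_add_sin_sq, Matrix.one_apply] <;> ring_nf <;>
    simp [Real.sin_sq_add_cos_sq, Real.cos_sq_add_sin_sq]

theorem B3_det (θ : ℝ) : (B3 θ).det = 1 := by
  simp [B3, Matrix.det_fin_three]
  ring_nf
  nlinarith [Real.sin_sq_add_cos_sq θ]

theorem B3_transpose (θ : ℝ) : (B3 θ)ᵀ = B3 θ := by
  ext i j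
  fin_cases i <;> fin_cases j <;> simp [B3]

theorem B3_entry (θ φ : ℝ) : (B3 θ * B3 φ) 0 1 = Real.sin (φ - θ) := by
  rw [B3_mul, Real.sin_sub]
  simp
  ring

noncomputable def EQ (n : ℕ) (hn : 3 ≤ n) : (Fin 3 ⊕ Fin (n - 3)) ≃ Fin n :=
  finSumFinEquiv.trans (finCongr (by omega))

noncomputable def MB (n : ℕ) (hn : 3 ≤ n) (θ : ℝ) : Matrix (Fin n) (Fin n) ℝ :=
  Matrix.reindexAlgEquiv ℝ ℝ (EQ n hn) (Matrix.fromBlocks (B3 θ) 0 0 1)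

theorem MB_mul (n : ℕ) (hn : 3 ≤ n) (θ φ : ℝ) : MB n hn θ * MB n hn φ =
    Matrix.reindexAlgEquiv ℝ ℝ (EQ n hn) (Matrix.fromBlocks (B3 θ * B3 φ) 0 0 1) := by
  rw [MB, MB, ← _root_.map_mul]
  congr 1
  simp [Matrix.fromBlocks_multiply]

theorem MB_sq (n : ℕ) (hn : 3 ≤ n) (θ : ℝ) : MB n hn θ * MB n hn θ = 1 := by
  rw [MB_mul, B3_sq]
  simp [Matrix.fromBlocks_one]

theorem MB_det (n : ℕ) (hn : 3 ≤ n) (θ : ℝ) : (MB n hn θ).det = 1 := by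
  rw [MB]
  simp [Matrix.reindexAlgEquiv_apply, Matrix.det_reindex_self,
    Matrix.det_fromBlocks_zero₂₁, B3_det]

theorem MB_transpose (n : ℕ) (hn : 3 ≤ n) (θ : ℝ) : (MB n hn θ)ᵀ = MB n hn θ := by
  rw [MB]
  simp only [Matrix.reindexAlgEquiv_apply, ← Matrix.transpose_reindex]
  simp [Matrix.fromBlocks_transpose, B3_transpose]

theorem MB_entry (n : ℕ) (hn : 3 ≤ n) (θ φ : ℝ) :
    (MB n hn θ * MB n hn φ) (EQ n hn (Sum.inl 0)) (EQ n hn (Sum.inl 1)) =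
      Real.sin (φ - θ) := by
  rw [MB_mul, ← B3_entry θ φ]
  simp [Matrix.reindexAlgEquiv_apply, Matrix.reindex_apply]

theorem MB_orth (n : ℕ) (hn : 3 ≤ n) (θ : ℝ) :
    MB n hn θ ∈ Matrix.orthogonalGroup (Fin n) ℝ := by
  rw [Matrix.mem_orthogonalGroup_iff, MB_transpose, MB_sq]

/-- `SO n` as the subgroup of the real orthogonal group consisting of matrices of
determinant one. -/
def SO (n : ℕ) : Subgroup ↥(Matrix.orthogonalGroup (Fin n) ℝ) where
  carrier := {A | (A : Matrix (Fin n) (Fin n) ℝ).det = 1}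
  one_mem' := by simp
  mul_mem' := by
    intro a b ha hb
    simp only [Set.mem_setOf_eq, Submonoid.coe_mul, Matrix.det_mul] at *
    rw [ha, hb, mul_one]
  inv_mem' := by
    intro a ha
    simp only [Set.mem_setOf_eq] at *
    have : ((a⁻¹ : ↥(Matrix.orthogonalGroup (Fin n) ℝ)) : Matrix (Fin n) (Fin n) ℝ)
        = star (a : Matrix (Fin n) (Fin n) ℝ) := rfl
    rw [this, Matrix.star_eq_conjTranspose, Matrix.det_conjTranspose, ha, star_one]

noncomputable def ASO (n : ℕ) (hn : 3 ≤ n) (θ : ℝ) : SO n :=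
  ⟨⟨MB n hn θ, MB_orth n hn θ⟩, MB_det n hn θ⟩

theorem ASO_coe_mul (n : ℕ) (hn : 3 ≤ n) (θ φ : ℝ) :
    (((ASO n hn θ * ASO n hn φ : SO n) : ↥(Matrix.orthogonalGroup (Fin n) ℝ)) :
      Matrix (Fin n) (Fin n) ℝ) = MB n hn θ * MB n hn φ := rfl

theorem ASO_sq (n : ℕ) (hn : 3 ≤ n) (θ : ℝ) : (ASO n hn θ) ^ 2 = 1 := by
  rw [pow_two]
  apply Subtype.ext
  apply Subtype.ext
  have h1 : (((ASO n hn θ * ASO n hn θ : SO n) : ↥(Matrix.orthogonalGroup (Fin n) ℝ)) :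
      Matrix (Fin n) (Fin n) ℝ) = 1 := by rw [ASO_coe_mul, MB_sq]
  rw [h1]
  rfl

theorem ASO_noncomm (n : ℕ) (hn : 3 ≤ n) (θ φ : ℝ) (h : Real.sin (φ - θ) ≠ 0) :
    ASO n hn θ * ASO n hn φ ≠ ASO n hn φ * ASO n hn θ := by
  intro he
  have := congrArg (fun A : SO n =>
    ((A : ↥(Matrix.orthogonalGroup (Fin n) ℝ)) : Matrix (Fin n) (Fin n) ℝ)
      (EQ n hn (Sum.inl 0)) (EQ n hn (Sum.inl 1))) he
  simp only [ASO_coe_mul, MB_entry] at this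
  have hsin : Real.sin (θ - φ) = -Real.sin (φ - θ) := by
    rw [← Real.sin_neg]; ring_nf
  rw [hsin] at this
  exact h (by linarith)

theorem sq_eq_one_iff' (n : ℕ) (A : SO n) :
    A ^ 2 = 1 ↔ ((A : ↥(Matrix.orthogonalGroup (Fin n) ℝ)) : Matrix (Fin n) (Fin n) ℝ) *
      ((A : ↥(Matrix.orthogonalGroup (Fin n) ℝ)) : Matrix (Fin n) (Fin n) ℝ) = 1 := by
  constructor
  · intro h
    have := congrArg (fun A : SO n =>
      ((A : ↥(Matrix.orthogonalGroup (Fin n) ℝ)) : Matrix (Fin n) (Fin n) ℝ)) h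
    simpa [pow_two] using this
  · intro h
    rw [pow_two]
    apply Subtype.ext
    apply Subtype.ext
    simpa using h

/-- For `n ≥ 3`, the set of involutions in `SO(n)` is closed and stable under positive integer
powers, but is not a finite union of closed subgroups: Lawrence's theorem fails for
noncommutative compact Lie groups. -/
theorem involutions_in_SO_not_finite_union_of_closed_subgroups
    (n : ℕ) (hn : 3 ≤ n) :
    IsClosed {A : SO n | A ^ 2 = 1} ∧
    (∀ A ∈ {A : SO n | A ^ 2 = 1}, ∀ m : ℕ, 0 < m → A ^ m ∈ {A : SO n | A ^ 2 = 1}) ∧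
    ¬ ∃ 𝒢 : Finset (Subgroup (SO n)),
        (∀ G ∈ 𝒢, IsClosed (G : Set (SO n))) ∧
        {A : SO n | A ^ 2 = 1} = ⋃ G ∈ 𝒢, (G : Set (SO n)) := by
  refine ⟨?_, ?_, ?_⟩
  · -- closedness
    have hset : {A : SO n | A ^ 2 = 1} = (fun A : SO n =>
        ((A : ↥(Matrix.orthogonalGroup (Fin n) ℝ)) : Matrix (Fin n) (Fin n) ℝ) *
        ((A : ↥(Matrix.orthogonalGroup (Fin n) ℝ)) : Matrix (Fin n) (Fin n) ℝ)) ⁻¹' {1} := by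
      ext A
      simp only [Set.mem_setOf_eq, Set.mem_preimage, Set.mem_singleton_iff]
      exact sq_eq_one_iff' n A
    rw [hset]
    have hc : Continuous (fun A : SO n =>
        ((A : ↥(Matrix.orthogonalGroup (Fin n) ℝ)) : Matrix (Fin n) (Fin n) ℝ)) :=
      continuous_subtype_val.comp continuous_subtype_val
    exact isClosed_singleton.preimage (hc.mul hc)
  · -- stability under powers
    intro A hA m _
    simp only [Set.mem_setOf_eq] at *
    rw [← pow_mul, mul_comm, pow_mul, hA, one_pow]
  · -- not a finite union of closed subgroups
    rintro ⟨𝒢, -, hcover⟩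
    set N := 𝒢.card with hN
    set θ : Fin (N + 1) → ℝ := fun k => (k : ℝ) / (N + 1) with hθ
    have hθlt : ∀ k : Fin (N + 1), 0 ≤ θ k ∧ θ k < 1 := by
      intro k
      constructor
      · positivity
      · rw [hθ, div_lt_one (by positivity)]
        exact_mod_cast Nat.cast_lt.mpr k.isLt
    have hθinj : Function.Injective θ := by
      intro j k hjk
      have h : ((j : ℕ) : ℝ) = ((k : ℕ) : ℝ) := by
        simp only [hθ] at hjk
        rw [div_left_inj' (by positivity)] at hjk
        exact_mod_cast hjk
      exact Fin.ext (Nat.cast_injective h)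
    have hsin : ∀ j k : Fin (N + 1), j ≠ k → Real.sin (θ k - θ j) ≠ 0 := by
      intro j k hjk
      have h1 : -Real.pi < θ k - θ j := by
        have := (hθlt k).1; have := (hθlt j).2
        nlinarith [Real.pi_gt_three]
      have h2 : θ k - θ j < Real.pi := by
        have := (hθlt k).2; have := (hθlt j).1
        nlinarith [Real.pi_gt_three]
      intro h0
      rw [Real.sin_eq_zero_iff_of_lt_of_lt h1 h2] at h0
      exact hjk (hθinj (by linarith)).symm
    -- every ASO is in the union
    have hmem : ∀ k : Fin (N + 1), ∃ G ∈ 𝒢, ASO n hn (θ k) ∈ G := by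
      intro k
      have : ASO n hn (θ k) ∈ {A : SO n | A ^ 2 = 1} := ASO_sq n hn (θ k)
      rw [hcover] at this
      simpa using this
    choose G hG hGmem using hmem
    -- pigeonhole
    have hcard : Fintype.card {x // x ∈ 𝒢} < Fintype.card (Fin (N + 1)) := by
      simp [Fintype.card_coe]
      omega
    obtain ⟨j, k, hjk, hfeq⟩ :=
      Fintype.exists_ne_map_eq_of_card_lt (fun k => (⟨G k, hG k⟩ : {x // x ∈ 𝒢})) hcard
    have hGeq : G j = G k := congrArg Subtype.val hfeq
    set A := ASO n hn (θ j)
    set B := ASO n hn (θ k)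
    have hAmem : A ∈ G j := hGmem j
    have hBmem : B ∈ G j := hGeq ▸ hGmem k
    have hsq : ∀ x ∈ G j, x ^ 2 = 1 := by
      intro x hx
      have : x ∈ ⋃ G ∈ 𝒢, (G : Set (SO n)) := Set.mem_biUnion (hG j) hx
      rw [← hcover] at this
      exact this
    have hAA : A * A = 1 := by have := hsq A hAmem; rwa [pow_two] at this
    have hBB : B * B = 1 := by have := hsq B hBmem; rwa [pow_two] at this
    have hABAB : (A * B) * (A * B) = 1 := by
      have := hsq (A * B) (mul_mem hAmem hBmem); rwa [pow_two] at this
    have hcomm : A * B = B * A := by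
      have h1 : (A * B)⁻¹ = A * B := inv_eq_of_mul_eq_one_right hABAB
      have h2 : A⁻¹ = A := inv_eq_of_mul_eq_one_right hAA
      have h3 : B⁻¹ = B := inv_eq_of_mul_eq_one_right hBB
      calc A * B = (A * B)⁻¹ := h1.symm
        _ = B⁻¹ * A⁻¹ := mul_inv_rev A B
        _ = B * A := by rw [h2, h3]
    exact ASO_noncomm n hn (θ j) (θ k) (hsin j k hjk) hcomm
end
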